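/- Let n ∈ ℕ*, let A ∈ ℂ^{n×n} and B ∈ ℂ^{n} satisfy the Kalman rank condition rank(B, AB, …, A^{n−1}B) = n. Assume A has n pairwise distinct eigenvalues λ₁, …, λ_n ∈ ℂ and let λ ∈ ℝ be such that (λ_i + λ)I − A is invertible for every 1 ≤ i ≤ n. Define f_i := −((λ_i + λ)I − A)^{-1} B for 1 ≤ i ≤ n. Then the family (f₁, …, f_n) is a basis of ℂ^n. -/

import Mathlib

open Matrix Polynomial

private lemma isUnit_aeval_prod {n : ℕ} (A : Matrix (Fin n) (Fin n) ℂ)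
    {ι : Type*} (s : Finset ι) (g : ι → ℂ[X])
    (h : ∀ i ∈ s, IsUnit (aeval A (g i))) :
    IsUnit (aeval A (∏ i ∈ s, g i)) := by
  classical
  induction s using Finset.induction with
  | empty => simp
  | insert _ _ hi ih =>
    rename_i a s
    rw [Finset.prod_insert hi, _root_.map_mul]
    exact (h a (Finset.mem_insert_self a s)).mul
      (ih fun i his => h i (Finset.mem_insert_of_mem his))

private lemma key_poly {n : ℕ} (μ : Fin n → ℂ) (i : Fin n) :
    (C (μ i) - X) * Lagrange.basis Finset.univ μ i
      = C (-(∏ j ∈ Finset.univ.erase i, (μ i - μ j)⁻¹)) * Lagrange.nodal Finset.univ μ := by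
  classical
  rw [Lagrange.nodal_eq_mul_nodal_erase (Finset.mem_univ i)]
  unfold Lagrange.basis Lagrange.basisDivisor
  rw [Finset.prod_mul_distrib, ← map_prod, Lagrange.nodal_eq, map_neg]
  ring

/-- Let `A ∈ ℂ^{n×n}`, `B ∈ ℂ^n` satisfy the Kalman rank condition
(the vectors `B, AB, …, A^{n−1}B` span `ℂ^n`).  Assume `A` has `n` pairwise distinct
eigenvalues `ev 1, …, ev n` and let `λ ∈ ℝ` be such that `(ev i + λ)I − A` is invertible
for every `i`.  Define `f i := −((ev i + λ)I − A)⁻¹ B`.  Then `(f i)_{i}` is a basis of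
`ℂ^n`, i.e. it is linearly independent and spans. -/
theorem statement1 (n : ℕ) (hn : 0 < n)
    (A : Matrix (Fin n) (Fin n) ℂ) (B : Fin n → ℂ)
    (hKalman : Submodule.span ℂ (Set.range fun i : Fin n => (A ^ (i : ℕ)) *ᵥ B) = ⊤)
    (ev : Fin n → ℂ) (hev_inj : Function.Injective ev)
    (hev : ∀ i : Fin n, ∃ v : Fin n → ℂ, v ≠ 0 ∧ A *ᵥ v = ev i • v)
    (lam : ℝ)
    (hinv : ∀ i : Fin n,
      IsUnit ((ev i + (lam : ℂ)) • (1 : Matrix (Fin n) (Fin n) ℂ) - A)) :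
    LinearIndependent ℂ
      (fun i : Fin n => -(((ev i + (lam : ℂ)) • (1 : Matrix (Fin n) (Fin n) ℂ) - A)⁻¹ *ᵥ B)) ∧
    Submodule.span ℂ
      (Set.range fun i : Fin n =>
        -(((ev i + (lam : ℂ)) • (1 : Matrix (Fin n) (Fin n) ℂ) - A)⁻¹ *ᵥ B)) = ⊤ := by
  classical
  set μ : Fin n → ℂ := fun i => ev i + (lam : ℂ) with hμ
  have hμinj : Function.Injective μ := fun i j h => hev_inj (by
    simpa [hμ] using add_right_cancel h)
  set M : Fin n → Matrix (Fin n) (Fin n) ℂ :=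
    fun i => μ i • (1 : Matrix (Fin n) (Fin n) ℂ) - A with hM
  have hMu : ∀ i, IsUnit (M i) := hinv
  have hMdet : ∀ i, IsUnit (M i).det := fun i => (Matrix.isUnit_iff_isUnit_det _).mp (hMu i)
  set f : Fin n → (Fin n → ℂ) := fun i => -((M i)⁻¹ *ᵥ B) with hf
  set N : Matrix (Fin n) (Fin n) ℂ := aeval A (Lagrange.nodal Finset.univ μ) with hN
  have hNu : IsUnit N := by
    rw [hN, Lagrange.nodal_eq]
    refine isUnit_aeval_prod A _ _ fun i _ => ?_
    have : aeval A (X - C (μ i)) = -(M i) := by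
      simp [hM, map_sub, aeval_X, aeval_C, Algebra.algebraMap_eq_smul_one]
    rw [this]
    exact (hMu i).neg
  have hNdet : IsUnit N.det := (Matrix.isUnit_iff_isUnit_det _).mp hNu
  -- aeval of the Lagrange basis polynomial
  have haevalM : ∀ i, aeval A (C (μ i) - X) = M i := fun i => by
    simp [hM, map_sub, aeval_X, aeval_C, Algebra.algebraMap_eq_smul_one]
  have hcomm : ∀ i, M i * N = N * M i := by
    intro i
    rw [← haevalM i, hN, ← _root_.map_mul, ← _root_.map_mul, mul_comm]
  have hinvcomm : ∀ i, N * (M i)⁻¹ = (M i)⁻¹ * N := by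
    intro i
    have h1 : (M i)⁻¹ * (M i * N) * (M i)⁻¹ = N * (M i)⁻¹ := by
      rw [← Matrix.mul_assoc, Matrix.nonsing_inv_mul _ (hMdet i), Matrix.one_mul]
    rw [hcomm i, ← Matrix.mul_assoc, Matrix.mul_assoc _ (M i) _,
      Matrix.mul_nonsing_inv _ (hMdet i), Matrix.mul_one] at h1
    exact h1.symm
  have hbasis : ∀ i, aeval A (Lagrange.basis Finset.univ μ i)
      = (-(∏ j ∈ Finset.univ.erase i, (μ i - μ j)⁻¹)) • ((M i)⁻¹ * N) := by
    intro i
    have h1 := congrArg (aeval A) (key_poly μ i)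
    rw [_root_.map_mul, _root_.map_mul, haevalM i, aeval_C, Algebra.algebraMap_eq_smul_one] at h1
    have h2 : (M i)⁻¹ * (M i * aeval A (Lagrange.basis Finset.univ μ i))
        = (M i)⁻¹ * ((-(∏ j ∈ Finset.univ.erase i, (μ i - μ j)⁻¹)) •
            (1 : Matrix (Fin n) (Fin n) ℂ) * N) := by rw [h1]
    rwa [← Matrix.mul_assoc, Matrix.nonsing_inv_mul _ (hMdet i), Matrix.one_mul,
      Matrix.smul_mul, Matrix.one_mul, Matrix.mul_smul] at h2
  -- f spans
  have hspan : Submodule.span ℂ (Set.range f) = ⊤ := by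
    set S : Submodule ℂ (Fin n → ℂ) := Submodule.span ℂ (Set.range f) with hS
    have hmap : (⊤ : Submodule ℂ (Fin n → ℂ)) ≤ Submodule.map N.mulVecLin S := by
      rw [← hKalman, Submodule.span_le]
      rintro _ ⟨k, rfl⟩
      -- A^k *ᵥ B ∈ map N S
      have hXk : (X : ℂ[X]) ^ (k : ℕ)
          = ∑ i, C (μ i ^ (k : ℕ)) * Lagrange.basis Finset.univ μ i := by
        have hdeg : ((X : ℂ[X]) ^ (k : ℕ)).degree < (Finset.univ : Finset (Fin n)).card := by
          simpa [Polynomial.degree_X_pow] using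
            (Nat.cast_lt (α := WithBot ℕ)).mpr k.isLt
        have := Lagrange.eq_interpolate (f := (X : ℂ[X]) ^ (k : ℕ))
          (Function.Injective.injOn hμinj) hdeg
        rw [this, Lagrange.interpolate_apply]
        simp [Polynomial.eval_pow]
      have hAk : A ^ (k : ℕ)
          = ∑ i, (μ i ^ (k : ℕ)) • aeval A (Lagrange.basis Finset.univ μ i) := by
        have := congrArg (aeval A) hXk
        rw [map_pow, aeval_X, map_sum] at this
        simpa only [_root_.map_mul, aeval_C, ← Algebra.smul_def] using this
      have key : (A ^ (k : ℕ)) *ᵥ B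
          = N *ᵥ (∑ i, (μ i ^ (k : ℕ) * (∏ j ∈ Finset.univ.erase i, (μ i - μ j)⁻¹)) • f i) := by
        have e1 : ∀ (g : Fin n → Matrix (Fin n) (Fin n) ℂ) (s : Finset (Fin n)),
            (∑ i ∈ s, g i) *ᵥ B = ∑ i ∈ s, g i *ᵥ B := by
          intro g s
          induction s using Finset.induction with
          | empty => simp
          | insert _ _ hi ih => rename_i a s; rw [Finset.sum_insert hi, Finset.sum_insert hi,
              Matrix.add_mulVec, ih]
        have e2 : ∀ (v : Fin n → (Fin n → ℂ)) (s : Finset (Fin n)),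
            N *ᵥ (∑ i ∈ s, v i) = ∑ i ∈ s, N *ᵥ v i := by
          intro v s
          induction s using Finset.induction with
          | empty => simp
          | insert _ _ hi ih => rename_i a s; rw [Finset.sum_insert hi, Finset.sum_insert hi,
              Matrix.mulVec_add, ih]
        rw [hAk, e1, e2]
        refine Finset.sum_congr rfl fun i _ => ?_
        rw [hbasis i, ← hinvcomm i]
        simp only [hf, Matrix.neg_mulVec, Matrix.smul_mulVec, ← Matrix.mulVec_mulVec, Matrix.mulVec_smul,
          Matrix.mulVec_neg, smul_neg, neg_smul, neg_neg, smul_smul]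
      show (A ^ (k : ℕ)) *ᵥ B ∈ (Submodule.map N.mulVecLin S : Set (Fin n → ℂ))
      rw [key]
      exact Submodule.mem_map_of_mem (Submodule.sum_mem _ fun i _ =>
        Submodule.smul_mem _ _ (Submodule.subset_span ⟨i, rfl⟩))
    have hmap' : Submodule.map N.mulVecLin S = ⊤ := top_le_iff.mp hmap
    have : Submodule.map N⁻¹.mulVecLin (Submodule.map N.mulVecLin S) = S := by
      rw [← Submodule.map_comp, ← Matrix.mulVecLin_mul, Matrix.nonsing_inv_mul _ hNdet,
        Matrix.mulVecLin_one, Submodule.map_id]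
    rw [hmap', Submodule.map_top] at this
    rw [← this, LinearMap.range_eq_top]
    intro x
    exact ⟨N *ᵥ x, by
      simp [Matrix.mulVecLin, Matrix.mulVec_mulVec, Matrix.nonsing_inv_mul _ hNdet]⟩
  refine ⟨?_, hspan⟩
  have hcard : Fintype.card (Fin n) = Module.finrank ℂ (Fin n → ℂ) := by simp
  have := coe_basisOfTopLeSpanOfCardEqFinrank f (le_of_eq hspan.symm) hcard
  rw [← this]
  exact (basisOfTopLeSpanOfCardEqFinrank f (le_of_eq hspan.symm) hcard).linearIndependent
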